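/- For η ≥ 1, μ > 0, x > 0 and y > 0, setting c_μ = √(y/x) · I_μ(2√(xy)) / I_{μ-1}(2√(xy)), the homogeneous-type recurrence Q_{η,μ+2}(x,y) − Q_{η,μ+1}(x,y) − η·Q_{η-1,μ+2}(x,y) = c_{μ+1} · (Q_{η,μ+1}(x,y) − Q_{η,μ}(x,y) − η·Q_{η-1,μ+1}(x,y)) holds. -/

import Mathlib

open Real MeasureTheory

/-- Modified Bessel function of the first kind `I_ν(z)` via its Maclaurin series. -/
noncomputable def besselI (ν z : ℝ) : ℝ :=
  (z / 2) ^ ν * ∑' n : ℕ, (z ^ 2 / 4) ^ n / (n.factorial * Real.Gamma (ν + n + 1))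

/-- Upper incomplete gamma function `Γ(a, y)`. -/
noncomputable def uGamma (a y : ℝ) : ℝ := ∫ t in Set.Ioi y, t ^ (a - 1) * Real.exp (-t)

/-- Regularized upper incomplete gamma function `Q_a(y) = Γ(a,y)/Γ(a)`. -/
noncomputable def regQ (a y : ℝ) : ℝ := uGamma a y / Real.Gamma a

/-- η-th moment of the partial non-central chi-squared distribution (Nuttall Q-function). -/
noncomputable def nuttallQ (η μ x y : ℝ) : ℝ :=
  x ^ ((1 - μ) / 2) *
    ∫ t in Set.Ioi y, t ^ (η + (μ - 1) / 2) * Real.exp (-t - x) *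
      besselI (μ - 1) (2 * Real.sqrt (x * t))

/-- Generalized Marcum Q-function. -/
noncomputable def marcumQ (μ x y : ℝ) : ℝ := nuttallQ 0 μ x y

/-- Complementary Marcum function `P_μ(x,y)`. -/
noncomputable def marcumP (μ x y : ℝ) : ℝ :=
  x ^ ((1 - μ) / 2) *
    ∫ t in Set.Ioc 0 y, t ^ ((μ - 1) / 2) * Real.exp (-t - x) *
      besselI (μ - 1) (2 * Real.sqrt (x * t))

open Set Filter

lemma intOn {a y : ℝ} (ha : 0 < a) (hy : 0 < y) :
    IntegrableOn (fun t : ℝ => t ^ (a - 1) * Real.exp (-t)) (Set.Ioi y) := by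
  have h := (Real.GammaIntegral_convergent ha).mono_set (Set.Ioi_subset_Ioi hy.le)
  exact h.congr_fun (fun t _ => mul_comm _ _) measurableSet_Ioi

lemma uGamma_nonneg {a y : ℝ} (hy : 0 < y) : 0 ≤ uGamma a y := by
  apply integral_nonneg_of_ae
  filter_upwards [ae_restrict_mem measurableSet_Ioi] with t ht
  have : (0:ℝ) < t := hy.trans ht
  positivity

lemma uGamma_le_Gamma {a y : ℝ} (ha : 0 < a) (hy : 0 < y) :
    uGamma a y ≤ Real.Gamma a := by
  rw [Real.Gamma_eq_integral ha, uGamma]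
  have h1 : IntegrableOn (fun t : ℝ => Real.exp (-t) * t ^ (a-1)) (Set.Ioi 0) :=
    Real.GammaIntegral_convergent ha
  calc ∫ t in Set.Ioi y, t ^ (a - 1) * Real.exp (-t)
      = ∫ t in Set.Ioi y, Real.exp (-t) * t ^ (a-1) := by
        congr 1; ext t; ring
    _ ≤ ∫ t in Set.Ioi 0, Real.exp (-t) * t ^ (a-1) := by
        apply setIntegral_mono_set h1
        · filter_upwards [ae_restrict_mem measurableSet_Ioi] with t ht
          have : (0:ℝ) < t := ht
          positivity
        · exact Filter.Eventually.of_forall (Set.Ioi_subset_Ioi hy.le)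

lemma uGamma_rec {a y : ℝ} (ha : 0 < a) (hy : 0 < y) :
    uGamma (a + 1) y = a * uGamma a y + y ^ a * Real.exp (-y) := by
  have key : ∫ t in Set.Ioi y, (a * t ^ (a-1) * Real.exp (-t) - t ^ a * Real.exp (-t))
      = 0 - y ^ a * Real.exp (-y) := by
    apply integral_Ioi_of_hasDerivAt_of_tendsto'
      (f := fun t : ℝ => t ^ a * Real.exp (-t))
    · intro t ht
      have ht0 : (0:ℝ) < t := lt_of_lt_of_le hy ht
      have h1 : HasDerivAt (fun t : ℝ => t ^ a) (a * t ^ (a-1)) t :=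
        Real.hasDerivAt_rpow_const (Or.inl ht0.ne')
      have h2 : HasDerivAt (fun t : ℝ => Real.exp (-t)) (-Real.exp (-t)) t := by
        simpa using (hasDerivAt_neg t).exp
      have := h1.mul h2
      exact this.congr_deriv (by ring)
    · apply Integrable.sub
      · exact IntegrableOn.congr_fun ((intOn ha hy).const_mul a) (fun t _ => by ring) measurableSet_Ioi
      · have := intOn (a := a+1) (by linarith) hy
        exact IntegrableOn.congr_fun this (fun t _ => by norm_num) measurableSet_Ioi
    · have := tendsto_rpow_mul_exp_neg_mul_atTop_nhds_zero a 1 one_pos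
      simpa using this
  have hsplit : ∫ t in Set.Ioi y, (a * t ^ (a-1) * Real.exp (-t) - t ^ a * Real.exp (-t))
      = a * uGamma a y - uGamma (a+1) y := by
    rw [uGamma, uGamma]
    rw [integral_sub]
    · congr 1
      · rw [← integral_const_mul]; congr 1; ext t; ring
      · congr 1; ext t; norm_num
    · exact IntegrableOn.congr_fun ((intOn ha hy).const_mul a) (fun t _ => by ring) measurableSet_Ioi
    · exact IntegrableOn.congr_fun (intOn (a := a+1) (by linarith) hy) (fun t _ => by norm_num) measurableSet_Ioi
  rw [hsplit] at key
  linarith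

lemma summable_G {x b c : ℝ} (hx : 0 < x) (hb : 0 < b) (hc : 0 < c) :
    Summable (fun n : ℕ => x ^ n * Real.Gamma (c + n) / (n.factorial * Real.Gamma (b + n))) := by
  set f : ℕ → ℝ := fun n => x ^ n * Real.Gamma (c + n) / (n.factorial * Real.Gamma (b + n)) with hf
  have hpos : ∀ n : ℕ, 0 < f n := by
    intro n
    have h1 : 0 < Real.Gamma (c + n) := Real.Gamma_pos_of_pos (by positivity)
    have h2 : 0 < Real.Gamma (b + n) := Real.Gamma_pos_of_pos (by positivity)
    have h3 : 0 < (n.factorial : ℝ) := by exact_mod_cast n.factorial_pos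
    positivity
  apply summable_of_ratio_norm_eventually_le (r := 1/2) (by norm_num)
  rw [Filter.eventually_atTop]
  refine ⟨⌈c⌉₊ + ⌈4 * x⌉₊, fun n hn => ?_⟩
  have hn1 : c ≤ (n : ℝ) := le_trans (Nat.le_ceil c) (by exact_mod_cast le_trans (Nat.le_add_right _ _) hn)
  have hn2 : 4 * x ≤ (n : ℝ) := le_trans (Nat.le_ceil _) (by exact_mod_cast le_trans (Nat.le_add_left _ _) hn)
  have hstep : f (n + 1) = f n * (x * (c + n) / ((n + 1) * (b + n))) := by
    have e1 : Real.Gamma (c + (n+1 : ℕ)) = (c + n) * Real.Gamma (c + n) := by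
      have : c + ((n : ℝ) + 1) = (c + n) + 1 := by ring
      push_cast
      rw [this, Real.Gamma_add_one (by positivity)]
    have e2 : Real.Gamma (b + (n+1 : ℕ)) = (b + n) * Real.Gamma (b + n) := by
      have : b + ((n : ℝ) + 1) = (b + n) + 1 := by ring
      push_cast
      rw [this, Real.Gamma_add_one (by positivity)]
    have h2 : (0:ℝ) < Real.Gamma (b + n) := Real.Gamma_pos_of_pos (by positivity)
    have h3 : (0:ℝ) < (n.factorial : ℝ) := by exact_mod_cast n.factorial_pos
    rw [hf]
    simp only [e1, e2, Nat.factorial_succ, pow_succ]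
    push_cast
    field_simp
  rw [Real.norm_eq_abs, Real.norm_eq_abs, abs_of_pos (hpos _), abs_of_pos (hpos n), hstep]
  have hratio : x * (c + n) / ((n + 1) * (b + n)) ≤ 1/2 := by
    rw [div_le_iff₀ (by positivity)]
    nlinarith [sq_nonneg ((n:ℝ) - 4*x)]
  calc f n * (x * (c + n) / ((n + 1) * (b + n))) ≤ f n * (1/2) := by
        apply mul_le_mul_of_nonneg_left hratio (hpos n).le
    _ = 1/2 * f n := by ring

lemma summable_S {z b : ℝ} (hz : 0 < z) (hb : 0 < b) :
    Summable (fun n : ℕ => z ^ n / (n.factorial * Real.Gamma (b + n))) := by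
  set f : ℕ → ℝ := fun n => z ^ n / (n.factorial * Real.Gamma (b + n)) with hf
  have hpos : ∀ n : ℕ, 0 < f n := by
    intro n
    have h2 : 0 < Real.Gamma (b + n) := Real.Gamma_pos_of_pos (by positivity)
    have h3 : 0 < (n.factorial : ℝ) := by exact_mod_cast n.factorial_pos
    positivity
  apply summable_of_ratio_norm_eventually_le (r := 1/2) (by norm_num)
  rw [Filter.eventually_atTop]
  refine ⟨⌈2 * z⌉₊, fun n hn => ?_⟩
  have hn2 : 2 * z ≤ (n : ℝ) := le_trans (Nat.le_ceil _) (by exact_mod_cast hn)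
  have hstep : f (n + 1) = f n * (z / ((n + 1) * (b + n))) := by
    have e2 : Real.Gamma (b + (n+1 : ℕ)) = (b + n) * Real.Gamma (b + n) := by
      have : b + ((n : ℝ) + 1) = (b + n) + 1 := by ring
      push_cast
      rw [this, Real.Gamma_add_one (by positivity)]
    have h2 : (0:ℝ) < Real.Gamma (b + n) := Real.Gamma_pos_of_pos (by positivity)
    have h3 : (0:ℝ) < (n.factorial : ℝ) := by exact_mod_cast n.factorial_pos
    rw [hf]
    simp only [e2, Nat.factorial_succ, pow_succ]
    push_cast
    field_simp
  rw [Real.norm_eq_abs, Real.norm_eq_abs, abs_of_pos (hpos _), abs_of_pos (hpos n), hstep]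
  have hratio : z / ((n + 1) * (b + n)) ≤ 1/2 := by
    rw [div_le_iff₀ (by positivity)]
    nlinarith
  calc f n * (z / ((n + 1) * (b + n))) ≤ f n * (1/2) := by
        apply mul_le_mul_of_nonneg_left hratio (hpos n).le
    _ = 1/2 * f n := by ring

lemma besselI_expand {ν z : ℝ} (hz : 0 < z) :
    besselI ν (2 * Real.sqrt z) = z ^ (ν / 2) * ∑' n : ℕ, z ^ n / (n.factorial * Real.Gamma (ν + n + 1)) := by
  rw [besselI]
  congr 1
  · have h2 : 2 * Real.sqrt z / 2 = z ^ (1/2 : ℝ) := by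
      rw [Real.sqrt_eq_rpow]; ring
    rw [h2, ← Real.rpow_mul hz.le]
    congr 1
    ring
  · apply tsum_congr
    intro n
    congr 2
    rw [mul_pow]
    rw [Real.sq_sqrt hz.le]
    norm_num

lemma nuttallQ_series {η μ x y : ℝ} (hη : 0 ≤ η) (hμ : 0 < μ) (hx : 0 < x) (hy : 0 < y) :
    nuttallQ η μ x y =
      Real.exp (-x) * ∑' n : ℕ, x ^ n * uGamma (η + μ + n) y /
        (n.factorial * Real.Gamma (μ + n)) := by
  set C : ℝ := x ^ ((μ - 1) / 2) * Real.exp (-x) with hC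
  have hCpos : 0 < C := by positivity
  set g : ℕ → ℝ → ℝ := fun n t =>
    C * (x ^ n * (t ^ ((η + μ + (n : ℝ)) - 1) * Real.exp (-t)) /
      (n.factorial * Real.Gamma (μ + n))) with hg
  have hapos : ∀ n : ℕ, 0 < η + μ + (n : ℝ) := fun n => by positivity
  have hGpos : ∀ n : ℕ, 0 < Real.Gamma (μ + n) := fun n => Real.Gamma_pos_of_pos (by positivity)
  have hfact : ∀ n : ℕ, (0:ℝ) < n.factorial := fun n => by exact_mod_cast n.factorial_pos
  -- integrability of each term
  have hint : ∀ n : ℕ, IntegrableOn (g n) (Set.Ioi y) := by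
    intro n
    have := (intOn (hapos n) hy).const_mul (C * x ^ n / (n.factorial * Real.Gamma (μ + n)))
    exact IntegrableOn.congr_fun this (fun t _ => by rw [hg]; ring) measurableSet_Ioi
  -- value of each integral
  have hval : ∀ n : ℕ, ∫ t in Set.Ioi y, g n t
      = C * (x ^ n * uGamma (η + μ + n) y / (n.factorial * Real.Gamma (μ + n))) := by
    intro n
    have : ∫ t in Set.Ioi y, g n t = ∫ t in Set.Ioi y,
        (C * x ^ n / (n.factorial * Real.Gamma (μ + n))) * (t ^ ((η + μ + (n:ℝ)) - 1) * Real.exp (-t)) := by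
      apply setIntegral_congr_fun measurableSet_Ioi
      intro t _
      rw [hg]; ring
    rw [this, integral_const_mul, uGamma]
    ring
  -- pointwise expansion of the integrand
  have hpt : ∀ t ∈ Set.Ioi y, t ^ (η + (μ - 1) / 2) * Real.exp (-t - x) *
      besselI (μ - 1) (2 * Real.sqrt (x * t)) = ∑' n : ℕ, g n t := by
    intro t ht
    have ht0 : (0:ℝ) < t := hy.trans ht
    have hxt : (0:ℝ) < x * t := by positivity
    rw [besselI_expand hxt, ← mul_assoc, ← tsum_mul_left]
    apply tsum_congr
    intro n
    have hΓ : μ - 1 + (n:ℝ) + 1 = μ + n := by ring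
    rw [hΓ, Real.mul_rpow hx.le ht0.le, mul_pow]
    have e1 : t ^ (η + (μ - 1) / 2) * t ^ ((μ - 1) / 2 : ℝ) * t ^ (n:ℕ)
        = t ^ ((η + μ + (n:ℝ)) - 1) := by
      rw [← Real.rpow_natCast t n, ← Real.rpow_add ht0, ← Real.rpow_add ht0]
      congr 1; ring
    calc t ^ (η + (μ - 1) / 2) * Real.exp (-t - x) *
          (x ^ ((μ-1)/2 : ℝ) * t ^ ((μ-1)/2 : ℝ)) * (x ^ n * t ^ n / (n.factorial * Real.Gamma (μ + n)))
        = (t ^ (η + (μ - 1) / 2) * t ^ ((μ - 1) / 2 : ℝ) * t ^ (n:ℕ)) *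
          (Real.exp (-t - x) * x ^ ((μ-1)/2 : ℝ) * x ^ n) / (n.factorial * Real.Gamma (μ + n)) := by
          ring
      _ = g n t := by
          rw [e1, hg, hC,
            show Real.exp (-t - x) = Real.exp (-t) * Real.exp (-x) by
              rw [← Real.exp_add]; ring_nf]
          ring
  -- summability of the integrals
  have hnonneg : ∀ n : ℕ, 0 ≤ C * (x ^ n * uGamma (η + μ + n) y / (n.factorial * Real.Gamma (μ + n))) := by
    intro n
    have := uGamma_nonneg (a := η + μ + n) hy
    have := (hGpos n).le
    positivity
  have hsumI : Summable (fun n : ℕ =>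
      C * (x ^ n * uGamma (η + μ + n) y / (n.factorial * Real.Gamma (μ + n)))) := by
    apply Summable.of_nonneg_of_le hnonneg (fun n => ?_)
      ((summable_G hx hμ (by positivity : (0:ℝ) < η + μ)).mul_left C)
    have h := uGamma_le_Gamma (hapos n) hy
    have h2 := (hGpos n).le
    have h3 := (hfact n).le
    gcongr
  -- swap integral and sum
  have hswap : ∫ t in Set.Ioi y, ∑' n : ℕ, g n t = ∑' n : ℕ, ∫ t in Set.Ioi y, g n t := by
    apply integral_tsum
    · intro n
      apply Measurable.aestronglyMeasurable
      fun_prop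
    · rw [ne_eq]
      have heq : ∀ n : ℕ, ∫⁻ t in Set.Ioi y, ‖g n t‖ₑ = ENNReal.ofReal (∫ t in Set.Ioi y, g n t) := by
        intro n
        rw [ofReal_integral_eq_lintegral_ofReal (hint n)]
        · apply lintegral_congr_ae
          filter_upwards [ae_restrict_mem measurableSet_Ioi] with t ht
          rw [Real.enorm_eq_ofReal]
          have ht0 : (0:ℝ) < t := hy.trans ht
          rw [hg]
          have := (hGpos n).le; have := (hfact n).le
          positivity
        · filter_upwards [ae_restrict_mem measurableSet_Ioi] with t ht
          have ht0 : (0:ℝ) < t := hy.trans ht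
          rw [hg]
          have := (hGpos n).le; have := (hfact n).le
          positivity
      simp_rw [heq, hval]
      rw [← ENNReal.ofReal_tsum_of_nonneg hnonneg hsumI]
      exact ENNReal.ofReal_ne_top
  -- assemble
  rw [nuttallQ, setIntegral_congr_fun measurableSet_Ioi hpt, hswap]
  simp_rw [hval]
  rw [tsum_mul_left, ← mul_assoc, hC, ← mul_assoc, ← Real.rpow_add hx]
  have : (1 - μ) / 2 + (μ - 1) / 2 = 0 := by ring
  rw [this, Real.rpow_zero, one_mul]

lemma summable_T {x y b c : ℝ} (hx : 0 < x) (hy : 0 < y) (hb : 0 < b) (hc : 0 < c) :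
    Summable (fun n : ℕ => x ^ n * uGamma (c + n) y / (n.factorial * Real.Gamma (b + n))) := by
  apply Summable.of_nonneg_of_le (fun n => ?_) (fun n => ?_) (summable_G hx hb hc)
  · have h1 := uGamma_nonneg (a := c + n) hy
    have h2 := (Real.Gamma_pos_of_pos (show (0:ℝ) < b + n by positivity)).le
    have h3 : (0:ℝ) ≤ n.factorial := by positivity
    positivity
  · have h := uGamma_le_Gamma (show (0:ℝ) < c + n by positivity) hy
    have h2 := (Real.Gamma_pos_of_pos (show (0:ℝ) < b + n by positivity)).le
    have h3 : (0:ℝ) ≤ n.factorial := by positivity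
    gcongr

lemma key {η μ x y : ℝ} (hη : 1 ≤ η) (hμ : 0 < μ) (hx : 0 < x) (hy : 0 < y) :
    nuttallQ η (μ + 1) x y - nuttallQ η μ x y - η * nuttallQ (η - 1) (μ + 1) x y =
      Real.exp (-x) * Real.exp (-y) * y ^ η * y ^ μ *
        ∑' n : ℕ, (x * y) ^ n / (n.factorial * Real.Gamma (μ + 1 + n)) := by
  have hη0 : (0:ℝ) ≤ η := by linarith
  have hμ1 : (0:ℝ) < μ + 1 := by linarith
  rw [nuttallQ_series hη0 hμ1 hx hy, nuttallQ_series hη0 hμ hx hy,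
    nuttallQ_series (show (0:ℝ) ≤ η - 1 by linarith) hμ1 hx hy]
  have hs1 := summable_T (c := η + (μ+1)) hx hy hμ1 (by linarith)
  have hs2 := summable_T (c := η + μ) hx hy hμ (by linarith)
  have hs3 := summable_T (c := η - 1 + (μ+1)) hx hy hμ1 (by linarith)
  rw [show η * (Real.exp (-x) * ∑' n : ℕ, x ^ n * uGamma (η - 1 + (μ+1) + n) y /
        (n.factorial * Real.Gamma (μ + 1 + n)))
      = Real.exp (-x) * ∑' n : ℕ, η * (x ^ n * uGamma (η - 1 + (μ+1) + n) y /
        (n.factorial * Real.Gamma (μ + 1 + n))) from by rw [tsum_mul_left]; ring]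
  rw [← mul_sub, ← mul_sub, ← Summable.tsum_sub hs1 hs2, ← Summable.tsum_sub (hs1.sub hs2) (hs3.mul_left η)]
  rw [mul_assoc, mul_assoc, mul_assoc]
  congr 1
  rw [← tsum_mul_left, ← tsum_mul_left, ← tsum_mul_left]
  apply tsum_congr
  intro n
  have ha : (0:ℝ) < η + μ + n := by positivity
  have e1 : η + (μ + 1) + (n:ℝ) = (η + μ + n) + 1 := by ring
  have e2 : η - 1 + (μ + 1) + (n:ℝ) = η + μ + n := by ring
  rw [e1, e2, uGamma_rec ha hy]
  have e3 : μ + 1 + (n:ℝ) = (μ + n) + 1 := by ring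
  rw [e3, Real.Gamma_add_one (show μ + (n:ℝ) ≠ 0 by positivity)]
  have e4 : y ^ (η + μ + (n:ℝ)) = y ^ η * y ^ μ * y ^ (n:ℕ) := by
    rw [← Real.rpow_natCast y n, ← Real.rpow_add hy, ← Real.rpow_add hy]
  rw [e4, mul_pow]
  have hG : Real.Gamma (μ + n) ≠ 0 := (Real.Gamma_pos_of_pos (by positivity)).ne'
  have hF : ((n.factorial : ℝ)) ≠ 0 := by positivity
  have hm : μ + (n:ℝ) ≠ 0 := by positivity
  field_simp
  ring

lemma besselI_eval {μ x y : ℝ} (hx : 0 < x) (hy : 0 < y) :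
    besselI μ (2 * Real.sqrt (x * y)) =
      (x * y) ^ (μ / 2) * ∑' n : ℕ, (x * y) ^ n / (n.factorial * Real.Gamma (μ + 1 + n)) := by
  rw [besselI_expand (by positivity)]
  congr 1
  exact tsum_congr fun n => by rw [show μ + (n:ℝ) + 1 = μ + 1 + n by ring]

lemma S_pos {z b : ℝ} (hz : 0 < z) (hb : 0 < b) :
    0 < ∑' n : ℕ, z ^ n / (n.factorial * Real.Gamma (b + n)) := by
  have hnn : ∀ n : ℕ, 0 ≤ z ^ n / (n.factorial * Real.Gamma (b + n)) := by
    intro n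
    have := (Real.Gamma_pos_of_pos (show (0:ℝ) < b + n by positivity)).le
    have : (0:ℝ) ≤ n.factorial := by positivity
    positivity
  apply Summable.tsum_pos (summable_S hz hb) hnn 0
  have h1 : (0:ℝ) < Real.Gamma (b + (0:ℕ)) := Real.Gamma_pos_of_pos (by norm_num; exact hb)
  have h2 : (0:ℝ) < (Nat.factorial 0 : ℝ) := by norm_num
  positivity

theorem nuttallQ_homogeneous_recurrence (η μ x y : ℝ) (hη : 1 ≤ η) (hμ : 0 < μ)
    (hx : 0 < x) (hy : 0 < y) :
    nuttallQ η (μ + 2) x y - nuttallQ η (μ + 1) x y - η * nuttallQ (η - 1) (μ + 2) x y =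
      (Real.sqrt (y / x) * (besselI (μ + 1) (2 * Real.sqrt (x * y)) /
          besselI μ (2 * Real.sqrt (x * y)))) *
        (nuttallQ η (μ + 1) x y - nuttallQ η μ x y - η * nuttallQ (η - 1) (μ + 1) x y) := by
  have hxy : (0:ℝ) < x * y := by positivity
  have k1 := key hη hμ hx hy
  have k2 := key hη (show (0:ℝ) < μ + 1 by linarith) hx hy
  rw [show μ + 1 + 1 = μ + 2 by ring] at k2
  rw [k1, k2, besselI_eval (μ := μ + 1) hx hy, besselI_eval hx hy]
  set S1 : ℝ := ∑' n : ℕ, (x * y) ^ n / (n.factorial * Real.Gamma (μ + 1 + n)) with hS1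
  set S2 : ℝ := ∑' n : ℕ, (x * y) ^ n / (n.factorial * Real.Gamma (μ + 1 + 1 + n)) with hS2
  have hS1pos : 0 < S1 := S_pos hxy (by linarith)
  have hS2' : S2 = ∑' n : ℕ, (x * y) ^ n / (n.factorial * Real.Gamma (μ + 2 + n)) := by
    rw [hS2]; exact tsum_congr fun n => by rw [show μ + 1 + 1 + (n:ℝ) = μ + 2 + n by ring]
  rw [hS2'] at *
  have e1 : (x * y) ^ ((μ + 1) / 2) = (x * y) ^ (μ / 2) * (x * y) ^ (1/2 : ℝ) := by
    rw [← Real.rpow_add hxy]; congr 1; ring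
  have e2 : Real.sqrt (y / x) * (x * y) ^ (1/2 : ℝ) = y := by
    rw [Real.sqrt_eq_rpow, ← Real.mul_rpow (by positivity) hxy.le,
      show y / x * (x * y) = y * y from by field_simp,
      ← Real.sqrt_eq_rpow, Real.sqrt_mul_self hy.le]
  have e3 : y ^ (μ + 1 : ℝ) = y ^ μ * y := by rw [Real.rpow_add hy, Real.rpow_one]
  have hq : (x * y) ^ (μ / 2) ≠ 0 := by positivity
  have e2b : Real.sqrt y * (x * y) ^ (1/2 : ℝ) = y * Real.sqrt x := by
    rw [Real.sqrt_eq_rpow, ← Real.mul_rpow hy.le hxy.le,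
      show y * (x * y) = (y * y) * x from by ring,
      Real.mul_rpow (by positivity) hx.le, ← Real.sqrt_eq_rpow, ← Real.sqrt_eq_rpow,
      Real.sqrt_mul_self hy.le]
  rw [e1, e3]
  have hS1ne : S1 ≠ 0 := hS1pos.ne'
  rw [mul_assoc ((x*y) ^ (μ/2 : ℝ)), mul_div_mul_left _ _ hq]
  have step : Real.sqrt (y / x) * ((x * y) ^ (1/2 : ℝ) *
        (∑' n : ℕ, (x * y) ^ n / (n.factorial * Real.Gamma (μ + 2 + n))) / S1) *
      (Real.exp (-x) * Real.exp (-y) * y ^ η * y ^ μ * S1)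
      = (Real.sqrt (y / x) * (x * y) ^ (1/2 : ℝ)) *
        (∑' n : ℕ, (x * y) ^ n / (n.factorial * Real.Gamma (μ + 2 + n))) *
        (Real.exp (-x) * Real.exp (-y) * y ^ η * y ^ μ) * (S1 / S1) := by
    ring
  rw [step, div_self hS1ne, mul_one, e2]
  ring
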